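/- The map τ: {(X,Y) ∈ J×J : X∘X = X, tr X = 1, X∘Y = ½Y, Y ≠ 0} → {A ∈ J^ℂ : A∘A = 0, A ≠ 0} given by τ(X,Y) = (‖Y‖²X − Y∘Y)⊗1 + (1/√2)‖Y‖Y⊗√−1 is a bijection, with inverse σ(A) = (X,Y) where X = (1/(2‖A‖))(A + Ā) + (A∘Ā)/‖A‖², Y = −(√−1/√2)‖A‖^{−1/2}(A − Ā). -/

import Mathlib

/-- Abstract data of a (27-dimensional exceptional) Jordan algebra:
a commutative real algebra with unit `E`, a linear trace form `tr` with
`tr E = 3`, whose trace form `(X,Y) = tr (X ∘ Y)` is associative. -/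
structure JordanData (J : Type) [AddCommGroup J] [Module ℝ J] where
  mul : J →ₗ[ℝ] J →ₗ[ℝ] J
  comm : ∀ x y : J, mul x y = mul y x
  E : J
  one_mul : ∀ x : J, mul E x = x
  tr : J →ₗ[ℝ] ℝ
  trE : tr E = 3
  assoc : ∀ x y z : J, tr (mul (mul x y) z) = tr (mul x (mul y z))

namespace JordanData

noncomputable section

variable {J : Type} [AddCommGroup J] [Module ℝ J] (D : JordanData J)

/-- The trace bilinear form `(X,Y) = tr (X ∘ Y)`. -/
def inner (x y : J) : ℝ := D.tr (D.mul x y)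

/-- The Freudenthal product
`X×Y = ½{2X∘Y − (tr X)Y − (tr Y)X + (tr X·tr Y − tr(X∘Y))E}`. -/
def cross (x y : J) : J :=
  (1 / 2 : ℝ) • ((2 : ℝ) • D.mul x y - D.tr x • y - D.tr y • x
    + (D.tr x * D.tr y - D.tr (D.mul x y)) • D.E)

/-- `det X = ⅓ tr (X ∘ (X × X))`. -/
def det (x : J) : ℝ := (1 / 3 : ℝ) * D.tr (D.mul x (D.cross x x))

/-- The Cayley–Hamilton identity `X∘(X×X) = det X · E`. -/
def CayleyHamilton : Prop := ∀ x : J, D.mul x (D.cross x x) = D.det x • D.E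

/-- The adjoint identity `(X×X)×(X×X) = det X · X`. -/
def AdjointIdentity : Prop := ∀ x : J, D.cross (D.cross x x) (D.cross x x) = D.det x • x

/-! Complexification `J^ℂ = J ⊗ ℂ`, modelled as pairs `(a, b) = a⊗1 + b⊗√−1`. -/

/-- Multiplication on the complexification. -/
def mulC (A B : J × J) : J × J :=
  (D.mul A.1 B.1 - D.mul A.2 B.2, D.mul A.1 B.2 + D.mul A.2 B.1)

/-- Scalar multiplication of a complex number on `J^ℂ`. -/
def smulC (z : ℂ) (A : J × J) : J × J :=
  (z.re • A.1 - z.im • A.2, z.im • A.1 + z.re • A.2)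

/-- Complex conjugation on `J^ℂ`. -/
def conjC (A : J × J) : J × J := (A.1, -A.2)

/-- The complexified trace. -/
def trC (A : J × J) : ℂ := ⟨D.tr A.1, D.tr A.2⟩

/-- The unit of `J^ℂ`. -/
def EC : J × J := (D.E, 0)

/-- The complexified Freudenthal product. -/
def crossC (A B : J × J) : J × J :=
  smulC (1 / 2 : ℂ) (smulC 2 (D.mulC A B) - smulC (D.trC A) B - smulC (D.trC B) A
    + smulC (D.trC A * D.trC B - D.trC (D.mulC A B)) D.EC)

/-- The complexified determinant. -/
def detC (A : J × J) : ℂ := (1 / 3 : ℂ) * D.trC (D.mulC A (crossC D A A))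

/-- Cayley–Hamilton on the complexification. -/
def CayleyHamiltonC : Prop := ∀ A : J × J, D.mulC A (crossC D A A) = smulC (D.detC A) D.EC

/-- The map `τ(X,Y) = (‖Y‖²X − Y∘Y)⊗1 + (1/√2)‖Y‖Y⊗√−1`. -/
def tau (X Y : J) : J × J :=
  (D.inner Y Y • X - D.mul Y Y, (Real.sqrt (D.inner Y Y) / Real.sqrt 2) • Y)

end

end JordanData


namespace JordanData

noncomputable section

variable {J : Type} [AddCommGroup J] [Module ℝ J] (D : JordanData J)

/-- The Hermitian norm `‖A‖ = ((a,a)+(b,b))^{1/2}` on `J^ℂ`. -/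
def normC (A : J × J) : ℝ := Real.sqrt (D.inner A.1 A.1 + D.inner A.2 A.2)

/-- The first component of the inverse map:
`X = (1/(2‖A‖))(A + Ā) + (A∘Ā)/‖A‖²`. -/
def sigmaX (A : J × J) : J × J :=
  smulC (((1 / (2 * D.normC A) : ℝ) : ℂ)) (A + conjC A)
    + smulC (((1 / (D.normC A) ^ 2 : ℝ) : ℂ)) (D.mulC A (conjC A))

/-- The second component of the inverse map:
`Y = −(√−1/√2)‖A‖^{−1/2}(A − Ā)`. -/
def sigmaY (A : J × J) : J × J :=
  smulC (-(Complex.I / ((Real.sqrt 2 * Real.sqrt (D.normC A) : ℝ) : ℂ)))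
    (A - conjC A)

end

end JordanData

namespace JordanData

noncomputable section

variable {J : Type} [AddCommGroup J] [Module ℝ J] (D : JordanData J)

lemma mulE (x : J) : D.mul x D.E = x := by rw [D.comm, D.one_mul]

lemma ch_poly (hCH : D.CayleyHamilton) (x : J) :
    D.mul x (D.mul x x) - D.tr x • D.mul x x
      + ((D.tr x * D.tr x - D.tr (D.mul x x)) / 2) • x = D.det x • D.E := by
  have h := hCH x
  unfold cross at h
  simp only [map_smul, map_add, map_sub, LinearMap.smul_apply, LinearMap.add_apply,
    LinearMap.sub_apply, D.mulE] at h
  rw [← h]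
  module

end

end JordanData
namespace JordanData

noncomputable section

variable {J : Type} [AddCommGroup J] [Module ℝ J] (D : JordanData J)

lemma ch_at (hCH : D.CayleyHamilton) (X Y : J) (hX : D.mul X X = X)
    (hXY : D.mul X Y = (1 / 2 : ℝ) • Y) (hXtr : D.tr X = 1) (s : ℝ) :
    s • ((-(D.tr Y / 2)) • X)
      + (s ^ 2) • (D.mul X (D.mul Y Y)
          + ((D.tr Y * D.tr Y - D.tr (D.mul Y Y)) / 2) • X - (D.tr Y / 2) • Y)
      + (s ^ 3) • (D.mul Y (D.mul Y Y) - D.tr Y • D.mul Y Y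
          + ((D.tr Y * D.tr Y - D.tr (D.mul Y Y)) / 2) • Y)
      = D.det (X + s • Y) • D.E := by
  have hYX : D.mul Y X = (1 / 2 : ℝ) • Y := by rw [D.comm, hXY]
  have hz2 : D.mul (X + s • Y) (X + s • Y) = X + s • Y + (s ^ 2) • D.mul Y Y := by
    simp only [map_add, map_smul, LinearMap.add_apply, LinearMap.smul_apply, hX, hXY, hYX]
    module
  have hz3 : D.mul (X + s • Y) (X + s • Y + (s ^ 2) • D.mul Y Y)
      = X + s • Y + (s ^ 2) • (D.mul X (D.mul Y Y) + D.mul Y Y)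
        + (s ^ 3) • D.mul Y (D.mul Y Y) := by
    simp only [map_add, map_smul, LinearMap.add_apply, LinearMap.smul_apply, hX, hXY, hYX]
    module
  have h := D.ch_poly hCH (X + s • Y)
  rw [hz2, hz3] at h
  have htr1 : D.tr (X + s • Y) = 1 + s * D.tr Y := by
    simp [map_add, map_smul, hXtr]
  have htr2 : D.tr (X + s • Y + (s ^ 2) • D.mul Y Y)
      = 1 + s * D.tr Y + s ^ 2 * D.tr (D.mul Y Y) := by
    simp [map_add, map_smul, hXtr]
  rw [htr1, htr2] at h
  linear_combination (norm := module) h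

end

end JordanData
namespace JordanData

noncomputable section

variable {J : Type} [AddCommGroup J] [Module ℝ J] (D : JordanData J)

lemma trY_eq_zero (hCH : D.CayleyHamilton) (X Y : J) (hX : D.mul X X = X)
    (hXY : D.mul X Y = (1 / 2 : ℝ) • Y) (hXtr : D.tr X = 1) (hY : Y ≠ 0) :
    D.tr Y = 0 := by
  have h1 := D.ch_at hCH X Y hX hXY hXtr 1
  have h2 := D.ch_at hCH X Y hX hXY hXtr (-1)
  have h3 := D.ch_at hCH X Y hX hXY hXtr 2
  set d1 := D.det (X + (1:ℝ) • Y)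
  set d2 := D.det (X + (-1:ℝ) • Y)
  set d3 := D.det (X + (2:ℝ) • Y)
  have hc1 : (-(D.tr Y / 2)) • X = ((6 * d1 - 2 * d2 - d3) / 6) • D.E := by
    linear_combination (norm := module) h1 - (1/3 : ℝ) • h2 - (1/6 : ℝ) • h3
  -- trace of hc1
  have ht : -(D.tr Y / 2) = (6 * d1 - 2 * d2 - d3) / 6 * 3 := by
    have := congrArg D.tr hc1
    simpa [map_smul, hXtr, D.trE, smul_eq_mul] using this
  -- multiply hc1 by Y
  have hm := congrArg (fun w => D.mul w Y) hc1
  simp only [map_smul, LinearMap.smul_apply, hXY, D.one_mul] at hm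
  have h0 : (-(D.tr Y / 2) * (1/2) - (-(D.tr Y / 2)) / 3) • Y = (0 : J) := by
    have e : (6 * d1 - 2 * d2 - d3) / 6 = -(D.tr Y / 2) / 3 := by linarith
    rw [e] at hm
    linear_combination (norm := module) hm
  rcases smul_eq_zero.mp h0 with h | h
  · nlinarith [h]
  · exact absurd h hY

end

end JordanData
namespace JordanData

noncomputable section

variable {J : Type} [AddCommGroup J] [Module ℝ J] (D : JordanData J)

lemma tr_smul' (c : ℝ) (x : J) : D.tr (c • x) = c * D.tr x := by
  simp [map_smul, smul_eq_mul]

lemma mul_smul_left (c : ℝ) (x y : J) : D.mul (c • x) y = c • D.mul x y := by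
  simp [map_smul, LinearMap.smul_apply]

lemma peirce_ids (hCH : D.CayleyHamilton) (hAdj : D.AdjointIdentity) (X Y : J)
    (hX : D.mul X X = X) (hXY : D.mul X Y = (1 / 2 : ℝ) • Y) (hXtr : D.tr X = 1)
    (hY : Y ≠ 0) :
    D.mul X (D.mul Y Y) = (D.tr (D.mul Y Y) / 2) • X ∧
    D.mul Y (D.mul Y Y) = (D.tr (D.mul Y Y) / 2) • Y ∧
    D.mul (D.mul Y Y) (D.mul Y Y) = (D.tr (D.mul Y Y) / 2) • (D.mul Y Y) := by
  have hu := D.trY_eq_zero hCH X Y hX hXY hXtr hY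
  set Q := D.mul Y Y with hQ
  set n := D.tr Q with hn
  have h1 := D.ch_at hCH X Y hX hXY hXtr 1
  have h2 := D.ch_at hCH X Y hX hXY hXtr (-1)
  have h3 := D.ch_at hCH X Y hX hXY hXtr 2
  rw [hu] at h1 h2 h3
  set d1 := D.det (X + (1:ℝ) • Y)
  set d2 := D.det (X + (-1:ℝ) • Y)
  set d3 := D.det (X + (2:ℝ) • Y)
  -- trace of X with Q
  have htrP : D.tr (D.mul X Q) = n / 2 := by
    rw [hQ, ← D.assoc X Y Y, hXY, D.mul_smul_left, D.tr_smul']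
    rw [hn]; ring
  -- identity I
  have hc2 : D.mul X Q - (n / 2) • X = ((d1 + d2) / 2) • D.E := by
    linear_combination (norm := module) (1/2 : ℝ) • h1 + (1/2 : ℝ) • h2
  have hd12 : (d1 + d2) / 2 = 0 := by
    have := congrArg D.tr hc2
    simp only [map_sub, map_smul, htrP, hXtr, D.trE, smul_eq_mul] at this
    linarith
  rw [hd12, zero_smul, sub_eq_zero] at hc2
  refine ⟨hc2, ?_⟩
  -- identity II
  have hc3 : D.mul Y Q - (n / 2) • Y = ((d3 - 3 * d1 - d2) / 6) • D.E := by
    linear_combination (norm := module) (-1/2 : ℝ) • h1 + (-1/6 : ℝ) • h2 + (1/6 : ℝ) • h3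
  set e3 := (d3 - 3 * d1 - d2) / 6
  have htR : D.tr (D.mul Y Q) = 3 * e3 := by
    have := congrArg D.tr hc3
    simp only [map_sub, map_smul, D.trE, smul_eq_mul, hu, ← hn] at this
    linarith
  have htXR : D.tr (D.mul X (D.mul Y Q)) = (1/2) * D.tr (D.mul Y Q) := by
    rw [← D.assoc X Y Q, hXY, D.mul_smul_left, D.tr_smul']
  have he3 : e3 = 0 := by
    have := congrArg (fun w => D.tr (D.mul X w)) hc3
    simp only [map_sub, map_smul, htXR, htR, D.mulE, hXtr, smul_eq_mul] at this
    have htXY : D.tr (D.mul X Y) = 0 := by rw [hXY, D.tr_smul', hu]; ring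
    rw [htXY] at this
    linarith
  rw [he3, zero_smul, sub_eq_zero] at hc3
  refine ⟨hc3, ?_⟩
  -- identity III
  have hcYY : D.cross Y Y = Q - (n / 2) • D.E := by
    unfold cross
    rw [hu, ← hQ, ← hn]
    module
  have hdetY : D.det Y = 0 := by
    unfold det
    rw [hcYY, map_sub, map_smul, D.mulE, hc3]
    simp
  have hadj := hAdj Y
  rw [hcYY, hdetY, zero_smul] at hadj
  set W := Q - (n / 2) • D.E with hW
  have hWW : D.mul W W = D.mul Q Q - n • Q + (n ^ 2 / 4) • D.E := by
    rw [hW]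
    simp only [map_sub, map_smul, LinearMap.sub_apply, LinearMap.smul_apply,
      D.mulE, D.one_mul]
    module
  have htrW : D.tr W = -(n / 2) := by
    rw [hW]; simp only [map_sub, map_smul, D.trE, smul_eq_mul, ← hn]; ring
  have htrQQ : D.tr (D.mul Q Q) = n ^ 2 / 2 := by
    rw [hQ]
    rw [D.assoc Y Y (D.mul Y Y), ← hQ, hc3, map_smul, D.tr_smul', ← hn]
    ring
  have htrWW : D.tr (D.mul W W) = n ^ 2 / 4 := by
    rw [hWW]
    simp only [map_add, map_sub, map_smul, D.trE, smul_eq_mul, htrQQ, ← hn]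
    ring
  have hfin : D.mul Q Q - (n / 2) • Q = 0 := by
    have : D.cross W W = D.mul Q Q - (n / 2) • Q := by
      unfold cross
      rw [htrW, htrWW, hWW, hW]
      module
    rw [← this, hadj]
  rw [sub_eq_zero] at hfin
  exact hfin

end

end JordanData
namespace JordanData

noncomputable section

variable {J : Type} [AddCommGroup J] [Module ℝ J] (D : JordanData J)

lemma smulC_real (r : ℝ) (A : J × J) :
    smulC ((r : ℂ)) A = (r • A.1, r • A.2) := by
  unfold smulC
  simp

lemma sigmaX_comp (a b : J) :
    D.sigmaX (a, b) = ((1 / (2 * D.normC (a, b))) • (a + a)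
      + (1 / (D.normC (a, b)) ^ 2) • (D.mul a a + D.mul b b), 0) := by
  unfold sigmaX conjC mulC
  rw [smulC_real, smulC_real]
  have h1 : ((a, b) + (a, -b) : J × J) = (a + a, 0) := by
    ext <;> simp
  rw [h1]
  ext <;> simp [D.comm b a]

lemma sigmaY_comp (a b : J) :
    D.sigmaY (a, b) = ((1 / (Real.sqrt 2 * Real.sqrt (D.normC (a, b)))) • (b + b), 0) := by
  unfold sigmaY conjC
  have h1 : ((a, b) - (a, -b) : J × J) = (0, b + b) := by
    ext <;> simp [two_smul]
  rw [h1]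
  set r := Real.sqrt 2 * Real.sqrt (D.normC (a, b)) with hr
  have hre : (-(Complex.I / (r : ℂ))).re = 0 := by
    simp [Complex.div_re]
  have him : (-(Complex.I / (r : ℂ))).im = -(1 / r) := by
    rcases eq_or_ne r 0 with h | h
    · simp [h]
    · simp [Complex.div_im, Complex.normSq_ofReal]
  unfold smulC
  rw [hre, him]
  ext <;> simp

end

end JordanData
namespace JordanData

noncomputable section

variable {J : Type} [AddCommGroup J] [Module ℝ J] (D : JordanData J)

lemma part1 (hCH : D.CayleyHamilton) (hAdj : D.AdjointIdentity)
    (hpos : ∀ x : J, x ≠ 0 → 0 < D.inner x x) (X Y : J)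
    (hX : D.mul X X = X) (hXtr : D.tr X = 1)
    (hXY : D.mul X Y = (1 / 2 : ℝ) • Y) (hY : Y ≠ 0) :
    D.mulC (D.tau X Y) (D.tau X Y) = 0 ∧ D.tau X Y ≠ 0 ∧
      D.sigmaX (D.tau X Y) = (X, 0) ∧ D.sigmaY (D.tau X Y) = (Y, 0) := by
  obtain ⟨hI, hII, hIII⟩ := D.peirce_ids hCH hAdj X Y hX hXY hXtr hY
  set Q := D.mul Y Y with hQ
  set n := D.tr Q with hn
  have hn0 : 0 < n := hpos Y hY
  have hinner : D.inner Y Y = n := rfl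
  set c : ℝ := Real.sqrt n / Real.sqrt 2 with hc
  have hs2 : Real.sqrt 2 * Real.sqrt 2 = 2 :=
    Real.mul_self_sqrt (by norm_num)
  have hsn : Real.sqrt n * Real.sqrt n = n := Real.mul_self_sqrt hn0.le
  have hsn0 : Real.sqrt n ≠ 0 := by positivity
  have hs20 : Real.sqrt 2 ≠ 0 := by positivity
  have hcc : c * c = n / 2 := by
    rw [hc, div_mul_div_comm, hsn, hs2]
  have hc0 : c ≠ 0 := by
    rw [hc]; positivity
  have htau : D.tau X Y = (n • X - Q, c • Y) := rfl
  set a : J := n • X - Q with ha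
  set b : J := c • Y with hb
  -- products
  have ha2 : D.mul a a = (n / 2) • Q := by
    rw [ha]
    simp only [map_sub, map_smul, LinearMap.sub_apply, LinearMap.smul_apply,
      hX, hI, hIII, D.comm Q X, ← hn]
    module
  have hb2 : D.mul b b = (n / 2) • Q := by
    rw [hb]
    simp only [map_smul, LinearMap.smul_apply, ← hQ, smul_smul, hcc]
  have hab : D.mul a b = 0 := by
    rw [ha, hb]
    simp only [map_sub, map_smul, LinearMap.sub_apply, LinearMap.smul_apply,
      hXY, D.comm Q Y, hII, ← hn]
    rw [smul_sub]
    rw [sub_eq_zero]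
    module
  have hba : D.mul b a = 0 := by rw [D.comm, hab]
  refine ⟨?_, ?_, ?_, ?_⟩
  · -- τ∘τ = 0
    rw [htau]
    unfold mulC
    simp only [ha2, hb2, hab, hba]
    ext <;> simp
  · -- τ ≠ 0
    rw [htau]
    intro h
    have : c • Y = 0 := congrArg Prod.snd h
    exact hY ((smul_eq_zero.mp this).resolve_left hc0)
  · -- σX τ = X
    rw [htau, D.sigmaX_comp]
    have hnorm : D.normC (a, b) = n := by
      unfold normC inner
      rw [ha2, hb2, map_smul, smul_eq_mul, ← hn]
      have : n / 2 * n + n / 2 * n = n ^ 2 := by ring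
      rw [this]
      exact Real.sqrt_sq hn0.le
    rw [hnorm]
    ext
    · show (1 / (2 * n)) • (a + a) + (1 / n ^ 2) • (D.mul a a + D.mul b b) = X
      rw [ha2, hb2, ha]
      match_scalars <;> field_simp <;> ring
    · rfl
  · -- σY τ = Y
    rw [htau, D.sigmaY_comp]
    have hnorm : D.normC (a, b) = n := by
      unfold normC inner
      rw [ha2, hb2, map_smul, smul_eq_mul, ← hn]
      have : n / 2 * n + n / 2 * n = n ^ 2 := by ring
      rw [this]
      exact Real.sqrt_sq hn0.le
    rw [hnorm]
    ext
    · show (1 / (Real.sqrt 2 * Real.sqrt n)) • (b + b) = Y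
      rw [hb]
      match_scalars
      field_simp
      rw [hc]
      field_simp
      have key : Real.sqrt 2 * Real.sqrt n * Real.sqrt 2 = 2 * Real.sqrt n := by
        rw [mul_comm (Real.sqrt 2) (Real.sqrt n), mul_assoc, hs2]; ring
      linarith [key]
    · rfl

end

end JordanData
namespace JordanData

noncomputable section

variable {J : Type} [AddCommGroup J] [Module ℝ J] (D : JordanData J)

lemma smulC_zeroA (z : ℂ) : smulC z (0 : J × J) = 0 := by
  unfold smulC; simp

lemma one_smulC (A : J × J) : smulC 1 A = A := by
  unfold smulC; simp

lemma smulC_smulC (z w : ℂ) (A : J × J) : smulC z (smulC w A) = smulC (z * w) A := by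
  unfold smulC
  ext <;> simp [Complex.mul_re, Complex.mul_im] <;> module

lemma smulC_sub (z : ℂ) (A B : J × J) : smulC z (A - B) = smulC z A - smulC z B := by
  unfold smulC
  ext <;> simp <;> module

lemma smulC_addA (z : ℂ) (A B : J × J) : smulC z (A + B) = smulC z A + smulC z B := by
  unfold smulC
  ext <;> simp <;> module

lemma mulC_EC (A : J × J) : D.mulC A (EC D) = A := by
  unfold mulC EC
  ext <;> simp [D.mulE]

lemma mulC_comm (A B : J × J) : D.mulC A B = D.mulC B A := by
  unfold mulC
  ext <;> simp [D.comm A.1 B.1, D.comm A.2 B.2, D.comm A.1 B.2, D.comm A.2 B.1] <;> abel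

lemma mulC_smulC (A B : J × J) (z : ℂ) :
    D.mulC A (smulC z B) = smulC z (D.mulC A B) := by
  unfold mulC smulC
  ext <;> simp [map_add, map_sub, map_smul] <;> module

lemma mulC_sub (A B C : J × J) : D.mulC A (B - C) = D.mulC A B - D.mulC A C := by
  unfold mulC
  ext <;> simp <;> module

lemma trC_zero : D.trC (0 : J × J) = 0 := by
  unfold trC
  simp [Complex.ext_iff]

lemma trC_smulC (z : ℂ) (A : J × J) : D.trC (smulC z A) = z * D.trC A := by
  unfold trC smulC
  simp [Complex.ext_iff, Complex.mul_re, Complex.mul_im, map_add, map_sub, map_smul,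
    smul_eq_mul]
  ring

lemma EC_ne : (EC D : J × J) ≠ 0 := by
  unfold EC
  intro h
  have h1 : D.E = 0 := congrArg Prod.fst h
  have := D.trE
  rw [h1, map_zero] at this
  norm_num at this

lemma smulC_cancel {z : ℂ} (hz : z ≠ 0) {A B : J × J} (h : smulC z A = smulC z B) :
    A = B := by
  have := congrArg (smulC z⁻¹) h
  rwa [smulC_smulC, smulC_smulC, inv_mul_cancel₀ hz, one_smulC, one_smulC] at this

lemma trC_eq_zero (hCHC : D.CayleyHamiltonC) (A : J × J) (hA : D.mulC A A = 0) :
    D.trC A = 0 := by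
  by_contra ht
  set t := D.trC A with htt
  have hcross : crossC D A A = smulC (t * t / 2) (EC D) - smulC t A := by
    unfold crossC
    rw [hA, D.trC_zero, smulC_zeroA, ← htt]
    rw [zero_sub, sub_zero]
    have inner_eq : -smulC t A - smulC t A + smulC (t * t) (EC D)
        = smulC (t * t) (EC D) - smulC 2 (smulC t A) := by
      rw [smulC_smulC]
      have h2 : smulC (2 * t) A = smulC t A + smulC t A := by
        unfold smulC
        ext <;> simp [Complex.mul_re, Complex.mul_im] <;> module
      rw [h2]; abel
    rw [inner_eq, smulC_sub, smulC_smulC, smulC_smulC, smulC_smulC]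
    rw [show (1 / 2 : ℂ) * (t * t) = t * t / 2 from by ring]
    norm_num
  have hmc : D.mulC A (crossC D A A) = smulC (t * t / 2) A := by
    rw [hcross, mulC_sub, mulC_smulC, mulC_smulC, D.mulC_EC, hA, smulC_zeroA, sub_zero]
  have hdet : D.detC A = t * t * t / 6 := by
    unfold detC
    rw [hmc, trC_smulC, ← htt]
    ring
  have h := hCHC A
  rw [hmc, hdet] at h
  -- A = smulC (t/3) EC
  have hA' : A = smulC (t / 3) (EC D) := by
    have h2 := congrArg (smulC (2 / (t * t))) h
    rw [smulC_smulC, smulC_smulC] at h2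
    have e1 : 2 / (t * t) * (t * t / 2) = 1 := by
      field_simp
    have e2 : 2 / (t * t) * (t * t * t / 6) = t / 3 := by
      field_simp; ring
    rwa [e1, e2, one_smulC] at h2
  rw [hA'] at hA
  rw [mulC_smulC, D.mulC_EC, smulC_smulC] at hA
  have : (EC D : J × J) = 0 := by
    have hz : t / 3 * (t / 3) ≠ 0 := by
      simp [ht]
    have := congrArg (smulC (t / 3 * (t / 3))⁻¹) hA
    rwa [smulC_smulC, inv_mul_cancel₀ hz, one_smulC, smulC_zeroA] at this
  exact D.EC_ne this

end

end JordanData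
namespace JordanData

noncomputable section

variable {J : Type} [AddCommGroup J] [Module ℝ J] (D : JordanData J)

lemma part2 (hCH : D.CayleyHamilton) (hAdj : D.AdjointIdentity)
    (hCHC : D.CayleyHamiltonC)
    (hpos : ∀ x : J, x ≠ 0 → 0 < D.inner x x) (A : J × J)
    (hA : D.mulC A A = 0) (hA0 : A ≠ 0) :
    ∃ X Y : J, D.mul X X = X ∧ D.tr X = 1 ∧ D.mul X Y = (1 / 2 : ℝ) • Y ∧
      Y ≠ 0 ∧ D.sigmaX A = (X, 0) ∧ D.sigmaY A = (Y, 0) ∧ D.tau X Y = A := by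
  obtain ⟨a, b⟩ := A
  -- real components of A∘A = 0
  have hA1 : D.mul a a - D.mul b b = 0 := congrArg Prod.fst hA
  have hA2 : D.mul a b + D.mul b a = 0 := congrArg Prod.snd hA
  have hb2 : D.mul b b = D.mul a a := by rw [← sub_eq_zero]; rw [← neg_eq_zero]; rw [neg_sub]; exact hA1
  have hab : D.mul a b = 0 := by
    have : (2 : ℝ) • D.mul a b = 0 := by
      rw [two_smul]
      rw [D.comm a b] at hA2
      rw [D.comm a b]
      exact hA2
    exact (smul_eq_zero.mp this).resolve_left (by norm_num)
  have hba : D.mul b a = 0 := by rw [D.comm]; exact hab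
  -- traces vanish
  have htC := D.trC_eq_zero hCHC (a, b) hA
  have htra : D.tr a = 0 := by
    have := congrArg Complex.re htC
    simpa [trC] using this
  have htrb : D.tr b = 0 := by
    have := congrArg Complex.im htC
    simpa [trC] using this
  -- nondegeneracy
  have hbne : b ≠ 0 := by
    intro hb
    have hane : a ≠ 0 := by
      intro ha; exact hA0 (by rw [ha, hb]; rfl)
    have hpa := hpos a hane
    have : D.inner a a = 0 := by
      unfold inner
      rw [← hb2, hb]
      simp
    linarith
  have hane : a ≠ 0 := by
    intro ha
    have hpb := hpos b hbne
    have : D.inner b b = 0 := by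
      unfold inner
      rw [hb2, ha]
      simp
    linarith
  set p := D.tr (D.mul a a) with hp
  have hp0 : 0 < p := hpos a hane
  set Q := D.mul a a with hQ
  -- Cayley-Hamilton at a+b and a-b
  have hs1 : D.mul (a + b) (a + b) = Q + Q := by
    simp only [map_add, LinearMap.add_apply, hab, hba, hb2, ← hQ]
    module
  have hs2 : D.mul (a - b) (a - b) = Q + Q := by
    simp only [map_sub, LinearMap.sub_apply, hab, hba, hb2, ← hQ]
    module
  have hplus := D.ch_poly hCH (a + b)
  have hminus := D.ch_poly hCH (a - b)
  rw [hs1] at hplus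
  rw [hs2] at hminus
  have htrab : D.tr (a + b) = 0 := by simp [map_add, htra, htrb]
  have htrab' : D.tr (a - b) = 0 := by simp [map_sub, htra, htrb]
  have htrQQ2 : D.tr (Q + Q) = 2 * p := by
    simp only [map_add, ← hQ, ← hp]; ring
  rw [htrab, htrQQ2] at hplus
  rw [htrab', htrQQ2] at hminus
  have hexp1 : D.mul (a + b) (Q + Q) = (2:ℝ) • D.mul a Q + (2:ℝ) • D.mul b Q := by
    simp only [map_add, LinearMap.add_apply]
    module
  have hexp2 : D.mul (a - b) (Q + Q) = (2:ℝ) • D.mul a Q - (2:ℝ) • D.mul b Q := by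
    simp only [map_add, map_sub, LinearMap.sub_apply]
    module
  rw [hexp1] at hplus
  rw [hexp2] at hminus
  set dP := D.det (a + b)
  set dM := D.det (a - b)
  -- trace identities
  have htrA3 : D.tr (D.mul a Q) = 0 := by
    rw [← hb2, ← D.assoc a b b, hab]
    simp
  have htrB3 : D.tr (D.mul b Q) = 0 := by
    rw [hQ, ← D.assoc b a a, hba]
    simp
  have hdP : dP = 0 := by
    have := congrArg D.tr hplus
    simp only [map_add, map_sub, map_smul, htrA3, htrB3, htrab, D.trE, smul_eq_mul] at this
    linarith
  have hdM : dM = 0 := by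
    have := congrArg D.tr hminus
    simp only [map_add, map_sub, map_smul, htrA3, htrB3, htrab', D.trE, smul_eq_mul] at this
    linarith
  rw [hdP, zero_smul] at hplus
  rw [hdM, zero_smul] at hminus
  have hA3 : D.mul a Q = (p / 2) • a := by
    linear_combination (norm := module) (1/4 : ℝ) • hplus + (1/4 : ℝ) • hminus
  have hB3 : D.mul b Q = (p / 2) • b := by
    linear_combination (norm := module) (1/4 : ℝ) • hplus - (1/4 : ℝ) • hminus
  -- a⁴ via the adjoint identity
  have htrA4 : D.tr (D.mul Q Q) = p ^ 2 / 2 := by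
    have e1 : D.tr (D.mul Q Q) = D.tr (D.mul (D.mul b b) Q) := by rw [hb2]
    rw [e1, D.assoc b b Q, hB3, map_smul, map_smul, smul_eq_mul, hb2, ← hp]
    ring
  have hcaa : D.cross a a = Q - (p / 2) • D.E := by
    unfold cross
    rw [htra, ← hQ, ← hp]
    module
  have hdeta : D.det a = 0 := by
    unfold det
    rw [hcaa, map_sub, map_smul, D.mulE, hA3]
    simp
  have hadj := hAdj a
  rw [hcaa, hdeta, zero_smul] at hadj
  set W := Q - (p / 2) • D.E with hW
  have hWW : D.mul W W = D.mul Q Q - p • Q + (p ^ 2 / 4) • D.E := by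
    rw [hW]
    simp only [map_sub, map_smul, LinearMap.sub_apply, LinearMap.smul_apply,
      D.mulE, D.one_mul]
    module
  have htrW : D.tr W = -(p / 2) := by
    rw [hW]; simp only [map_sub, map_smul, D.trE, smul_eq_mul, ← hQ, ← hp]; ring
  have htrWW : D.tr (D.mul W W) = p ^ 2 / 4 := by
    rw [hWW]
    simp only [map_add, map_sub, map_smul, D.trE, smul_eq_mul, htrA4, ← hQ, ← hp]
    ring
  have hA4 : D.mul Q Q = (p / 2) • Q := by
    have e : D.cross W W = D.mul Q Q - (p / 2) • Q := by
      unfold cross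
      rw [htrW, htrWW, hWW, hW]
      module
    rw [← sub_eq_zero, ← e, hadj]
  -- numerics
  set N := D.normC (a, b) with hN
  have hNval : N = Real.sqrt (2 * p) := by
    rw [hN]
    unfold normC inner
    rw [hb2]
    rw [show D.tr (D.mul a a) = p from rfl]
    rw [show p + p = 2 * p from by ring]
  have hN0 : 0 < N := by
    rw [hNval]
    positivity
  have hNsq : N ^ 2 = 2 * p := by
    rw [hNval, Real.sq_sqrt (by positivity)]
  have hNne : N ≠ 0 := ne_of_gt hN0
  have hs2' : Real.sqrt 2 * Real.sqrt 2 = 2 := Real.mul_self_sqrt (by norm_num)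
  have hsN : Real.sqrt N * Real.sqrt N = N := Real.mul_self_sqrt hN0.le
  have hs20 : Real.sqrt 2 ≠ 0 := by positivity
  have hsN0 : Real.sqrt N ≠ 0 := by positivity
  -- define X and Y
  set k : ℝ := 2 / (Real.sqrt 2 * Real.sqrt N) with hk
  have hk0 : k ≠ 0 := by
    rw [hk]; positivity
  have hkk : k * k = 2 / N := by
    rw [hk]
    rw [div_mul_div_comm, mul_mul_mul_comm, hs2', hsN]
    rw [show (2:ℝ) * 2 = 4 from by norm_num]
    rw [div_eq_div_iff (by positivity) hNne]
    ring
  set X : J := (1 / (2 * N)) • (a + a) + (1 / N ^ 2) • (D.mul a a + D.mul b b) with hX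
  set Y : J := (1 / (Real.sqrt 2 * Real.sqrt N)) • (b + b) with hY
  have hXc : X = (1 / N) • a + (2 / N ^ 2) • Q := by
    rw [hX, hb2, ← hQ]
    match_scalars
    all_goals field_simp
    all_goals try ring
    all_goals try (left; trivial)
  have hYc : Y = k • b := by
    rw [hY, hk]
    match_scalars
    field_simp
    norm_num
  have hp2 : p = N ^ 2 / 2 := by rw [hNsq]; ring
  -- X is idempotent
  have hXX : D.mul X X = X := by
    rw [hXc]
    simp only [map_add, map_smul, LinearMap.add_apply, LinearMap.smul_apply,
      ← hQ, hA3, hA4, D.comm Q a]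
    rw [hp2]
    match_scalars <;> field_simp <;> ring
  have hXtr : D.tr X = 1 := by
    rw [hXc]
    simp only [map_add, map_smul, smul_eq_mul, htra, ← hQ, ← hp]
    rw [hp2]
    field_simp
    ring
  have hXY : D.mul X Y = (1 / 2 : ℝ) • Y := by
    rw [hXc, hYc]
    simp only [map_add, map_smul, LinearMap.add_apply, LinearMap.smul_apply,
      hab, D.comm Q b, hB3]
    rw [hp2]
    match_scalars <;> field_simp <;> ring
  have hYne : Y ≠ 0 := by
    rw [hYc]
    exact smul_ne_zero hk0 hbne
  refine ⟨X, Y, hXX, hXtr, hXY, hYne, ?_, ?_, ?_⟩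
  · rw [D.sigmaX_comp, ← hN, ← hX]
  · rw [D.sigmaY_comp, ← hN, ← hY]
  · -- tau X Y = A
    have hYY : D.mul Y Y = (2 / N) • Q := by
      rw [hYc]
      simp only [map_smul, LinearMap.smul_apply, hb2, ← hQ, smul_smul, hkk]
    have hinY : D.inner Y Y = N := by
      unfold inner
      rw [hYY, map_smul, smul_eq_mul, ← hp, hp2]
      field_simp
    unfold tau
    rw [hinY, hYY, hXc, hYc]
    ext
    · show N • ((1 / N) • a + (2 / N ^ 2) • Q) - (2 / N) • Q = a
      match_scalars <;> field_simp <;> ring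
    · show (Real.sqrt N / Real.sqrt 2) • k • b = b
      rw [smul_smul, hk]
      rw [show Real.sqrt N / Real.sqrt 2 * (2 / (Real.sqrt 2 * Real.sqrt N)) = 1 by
        field_simp
        have key : Real.sqrt 2 * (Real.sqrt 2 * Real.sqrt N) = 2 * Real.sqrt N := by
          rw [← mul_assoc, hs2']
        linarith [key]]
      rw [one_smul]

end

end JordanData

/-- The map `τ(X,Y) = (‖Y‖²X − Y∘Y)⊗1 + (1/√2)‖Y‖Y⊗√−1` is a bijection from
the punctured tangent bundle `{(X,Y) : X∘X = X, tr X = 1, X∘Y = ½Y, Y ≠ 0}`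
onto `{A ∈ J^ℂ : A∘A = 0, A ≠ 0}`, with inverse `σ(A) = (X,Y)`,
`X = (1/(2‖A‖))(A+Ā) + (A∘Ā)/‖A‖²`, `Y = −(√−1/√2)‖A‖^{−1/2}(A−Ā)`. -/
theorem stmt12 {J : Type} [AddCommGroup J] [Module ℝ J] (D : JordanData J)
    (hCH : D.CayleyHamilton) (hAdj : D.AdjointIdentity)
    (hCHC : D.CayleyHamiltonC)
    (hpos : ∀ x : J, x ≠ 0 → 0 < D.inner x x) :
    (∀ X Y : J, D.mul X X = X → D.tr X = 1 → D.mul X Y = (1 / 2 : ℝ) • Y →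
        Y ≠ 0 →
      D.mulC (D.tau X Y) (D.tau X Y) = 0 ∧ D.tau X Y ≠ 0 ∧
        D.sigmaX (D.tau X Y) = (X, 0) ∧ D.sigmaY (D.tau X Y) = (Y, 0)) ∧
    (∀ A : J × J, D.mulC A A = 0 → A ≠ 0 →
      ∃ X Y : J, D.mul X X = X ∧ D.tr X = 1 ∧ D.mul X Y = (1 / 2 : ℝ) • Y ∧
        Y ≠ 0 ∧ D.sigmaX A = (X, 0) ∧ D.sigmaY A = (Y, 0) ∧ D.tau X Y = A) := by
  constructor
  · intro X Y hX hXtr hXY hY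
    exact D.part1 hCH hAdj hpos X Y hX hXtr hXY hY
  · intro A hA hA0
    exact D.part2 hCH hAdj hCHC hpos A hA hA0
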